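/- arXiv:2101.06957 — 3 statements merged into one kernel-verified Lean document; each statement's English description precedes it below -/
import Mathlib

section
/- Let Σ be a symmetric positive semidefinite real N×N matrix with Σ_{kk} > 0, let Ψ_0, …, Ψ_H be real N×N matrices, and suppose the scaling denominator D_j := Σ_{h=0}^H (Ψ_h Σ Ψ_hᵀ)_{jj} is strictly positive. Then the generalized forecast-error variance decomposition entry θ_{jk} := (Σ_{kk}^{-1} Σ_{h=0}^H ((Ψ_h Σ)_{jk})²) / D_j satisfies 0 ≤ θ_{jk} ≤ 1. -/
open Matrix Finset

open scoped MatrixOrder in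
lemma gfevd_key {N : ℕ} (Sig : Matrix (Fin N) (Fin N) ℝ)
    (hS : Sig.PosSemidef) (k j : Fin N) (Ψ : Matrix (Fin N) (Fin N) ℝ) :
    ((Ψ * Sig) j k) ^ 2 ≤ (Ψ * Sig * Ψᵀ) j j * Sig k k := by
  set S := CFC.sqrt Sig with hSdef
  have hSsym : Sᵀ = S := by
    have := (CFC.sqrt_nonneg Sig).isSelfAdjoint
    simpa [IsSelfAdjoint, Matrix.star_eq_conjTranspose, Matrix.conjTranspose_eq_transpose_of_trivial] using this
  have hsq : S * S = Sig := CFC.sqrt_mul_sqrt_self Sig hS.nonneg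
  have h1 : (Ψ * Sig) j k = ∑ i, (Ψ * S) j i * S i k := by
    rw [← hsq, ← mul_assoc]; simp [Matrix.mul_apply]
  have h2 : (Ψ * Sig * Ψᵀ) j j = ∑ i, ((Ψ * S) j i) ^ 2 := by
    have : Ψ * Sig * Ψᵀ = (Ψ * S) * (Ψ * S)ᵀ := by
      rw [Matrix.transpose_mul, hSsym, ← hsq]; noncomm_ring
    rw [this]; simp [Matrix.mul_apply, sq, mul_comm]
  have h3 : Sig k k = ∑ i, (S i k) ^ 2 := by
    rw [← hsq]; simp only [Matrix.mul_apply]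
    refine Finset.sum_congr rfl fun i _ => ?_
    have : S k i = S i k := by
      conv_lhs => rw [← hSsym]
      rfl
    rw [this, sq]
  rw [h1, h2, h3]
  exact Finset.sum_mul_sq_le_sq_mul_sq _ _ _

/-- the generalized forecast-error variance decomposition entry
`θ_{jk} = (Σ_{kk}⁻¹ ∑_{h=0}^H ((Ψ_h Σ)_{jk})²) / (∑_{h=0}^H (Ψ_h Σ Ψ_hᵀ)_{jj})`
lies in `[0, 1]` whenever `Σ` is symmetric positive semidefinite, `Σ_{kk} > 0` and the
denominator is strictly positive. -/
theorem gfevd_entry_mem_unit_interval {N H : ℕ} (Sig : Matrix (Fin N) (Fin N) ℝ)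
    (hS : Sig.PosSemidef) (k : Fin N) (hk : 0 < Sig k k)
    (Ψ : ℕ → Matrix (Fin N) (Fin N) ℝ) (j : Fin N)
    (hD : 0 < ∑ h ∈ range (H + 1), (Ψ h * Sig * (Ψ h)ᵀ) j j) :
    0 ≤ ((Sig k k)⁻¹ * ∑ h ∈ range (H + 1), ((Ψ h * Sig) j k) ^ 2) /
          (∑ h ∈ range (H + 1), (Ψ h * Sig * (Ψ h)ᵀ) j j) ∧
      ((Sig k k)⁻¹ * ∑ h ∈ range (H + 1), ((Ψ h * Sig) j k) ^ 2) /
          (∑ h ∈ range (H + 1), (Ψ h * Sig * (Ψ h)ᵀ) j j) ≤ 1 := by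
  have hnum : 0 ≤ (Sig k k)⁻¹ * ∑ h ∈ range (H + 1), ((Ψ h * Sig) j k) ^ 2 :=
    mul_nonneg (inv_nonneg.2 hk.le) (Finset.sum_nonneg fun h _ => sq_nonneg _)
  refine ⟨div_nonneg hnum hD.le, ?_⟩
  rw [div_le_one hD]
  have hsum : ∑ h ∈ range (H + 1), ((Ψ h * Sig) j k) ^ 2 ≤
      (∑ h ∈ range (H + 1), (Ψ h * Sig * (Ψ h)ᵀ) j j) * Sig k k := by
    rw [Finset.sum_mul]
    exact Finset.sum_le_sum fun h _ => gfevd_key Sig hS k j (Ψ h)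
  calc (Sig k k)⁻¹ * ∑ h ∈ range (H + 1), ((Ψ h * Sig) j k) ^ 2
      ≤ (Sig k k)⁻¹ * ((∑ h ∈ range (H + 1), (Ψ h * Sig * (Ψ h)ᵀ) j j) * Sig k k) :=
        mul_le_mul_of_nonneg_left hsum (inv_nonneg.2 hk.le)
    _ = ∑ h ∈ range (H + 1), (Ψ h * Sig * (Ψ h)ᵀ) j j := by
        field_simp
end

section
/- Let ε_0, …, ε_H be independent mean-zero square-integrable random vectors in ℝ^N, each with covariance matrix Σ, let k be an index with Σ_{kk} ≠ 0, and let Ψ_0, …, Ψ_H be real N×N matrices. Define the conditional forecast error ξ^{k} := Σ_{h=0}^H Ψ_h (ε_h − Σ_{kk}^{-1} Σ_{·k} (ε_h)_k). Then the covariance matrix of ξ^{k} equals Ω^{k,H} = Σ_{h=0}^H Ψ_h Σ Ψ_hᵀ − Σ_{kk}^{-1} Σ_{h=0}^H Ψ_h Σ_{·k} Σ_{·k}ᵀ Ψ_hᵀ; that is, E[ξ^{k}_i ξ^{k}_j] = (Ω^{k,H})_{ij} for all indices i, j. -/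
open Matrix Finset MeasureTheory ProbabilityTheory

private lemma l2_mul_integrable' {Ω : Type*} [MeasurableSpace Ω] {μ : Measure Ω}
    [IsFiniteMeasure μ] {f g : Ω → ℝ} (hf : MemLp f 2 μ) (hg : MemLp g 2 μ) :
    Integrable (fun ω => f ω * g ω) μ := by
  have h : MemLp (f • g) 1 μ := hg.smul hf (hpqr := ⟨by
    rw [ENNReal.inv_two_add_inv_two, inv_one]⟩)
  exact h.integrable le_rfl

/-- for independent mean-zero square-integrable random vectors `ε_0, …, ε_H`
with common covariance `Σ`, `Σ_{kk} ≠ 0`, and matrices `Ψ_0, …, Ψ_H`, the conditional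
forecast error `ξ^k = ∑_{h=0}^H Ψ_h (ε_h − Σ_{kk}⁻¹ Σ_{·k} (ε_h)_k)` has covariance matrix
`Ω^{k,H} = ∑_h Ψ_h Σ Ψ_hᵀ − Σ_{kk}⁻¹ ∑_h Ψ_h Σ_{·k} Σ_{·k}ᵀ Ψ_hᵀ`. -/
theorem conditional_forecast_error_covariance {N H : ℕ} {Ω : Type*} [MeasurableSpace Ω]
    {μ : Measure Ω} [IsProbabilityMeasure μ]
    (Sig : Matrix (Fin N) (Fin N) ℝ) (ε : Fin (H + 1) → Ω → Fin N → ℝ)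
    (hmeas : ∀ h, Measurable (ε h))
    (hindep : iIndepFun ε μ)
    (hL2 : ∀ h i, MemLp (fun ω => ε h ω i) 2 μ)
    (hmean : ∀ h i, ∫ ω, ε h ω i ∂μ = 0)
    (hcov : ∀ h i j, ∫ ω, ε h ω i * ε h ω j ∂μ = Sig i j)
    (k : Fin N) (hk : Sig k k ≠ 0)
    (Ψ : Fin (H + 1) → Matrix (Fin N) (Fin N) ℝ) (i j : Fin N) :
    ∫ ω, (∑ h, (Ψ h).mulVec
            (fun a => ε h ω a - (Sig k k)⁻¹ * Sig.mulVec (Pi.single k 1) a * ε h ω k)) i *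
         (∑ h, (Ψ h).mulVec
            (fun a => ε h ω a - (Sig k k)⁻¹ * Sig.mulVec (Pi.single k 1) a * ε h ω k)) j ∂μ
      = ((∑ h, Ψ h * Sig * (Ψ h)ᵀ) -
          (Sig k k)⁻¹ • ∑ h, Ψ h *
            Matrix.vecMulVec (Sig.mulVec (Pi.single k 1)) (Sig.mulVec (Pi.single k 1)) *
              (Ψ h)ᵀ) i j := by
  classical
  set c : ℝ := (Sig k k)⁻¹ with hc
  have hS : ∀ a, Sig.mulVec (Pi.single k 1) a = Sig a k := by
    intro a; simp [Matrix.mulVec_single]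
  set g : Fin (H + 1) → Fin N → Ω → ℝ :=
    fun h a ω => ε h ω a - c * Sig a k * ε h ω k with hgdef
  have hgL2 : ∀ h a, MemLp (g h a) 2 μ := fun h a =>
    (hL2 h a).sub ((hL2 h k).const_mul (c * Sig a k))
  have hεint : ∀ h a b, Integrable (fun ω => ε h ω a * ε h ω b) μ := fun h a b =>
    l2_mul_integrable' (hL2 h a) (hL2 h b)
  have hsymm : ∀ a b, Sig a b = Sig b a := fun a b => by
    rw [← hcov 0 a b, ← hcov 0 b a]
    exact integral_congr_ae (.of_forall fun ω => mul_comm _ _)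
  have hgmean : ∀ h a, ∫ ω, g h a ω ∂μ = 0 := by
    intro h a
    have h1 : Integrable (fun ω => ε h ω a) μ := (hL2 h a).integrable one_le_two
    have h2 : Integrable (fun ω => c * Sig a k * ε h ω k) μ :=
      ((hL2 h k).integrable one_le_two).const_mul _
    have : ∫ ω, g h a ω ∂μ
        = (∫ ω, ε h ω a ∂μ) - ∫ ω, c * Sig a k * ε h ω k ∂μ := integral_sub h1 h2
    rw [this, integral_const_mul, hmean, hmean]; ring
  have hprod_int : ∀ h h' a b, Integrable (fun ω => g h a ω * g h' b ω) μ :=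
    fun h h' a b => l2_mul_integrable' (hgL2 h a) (hgL2 h' b)
  have hcross : ∀ h h' a b, h ≠ h' → ∫ ω, g h a ω * g h' b ω ∂μ = 0 := by
    intro h h' a b hne
    have hφ : Measurable (fun v : Fin N → ℝ => v a - c * Sig a k * v k) :=
      (measurable_pi_apply a).sub ((measurable_pi_apply k).const_mul _)
    have hψ : Measurable (fun v : Fin N → ℝ => v b - c * Sig b k * v k) :=
      (measurable_pi_apply b).sub ((measurable_pi_apply k).const_mul _)
    have hi : IndepFun (g h a) (g h' b) μ := (hindep.indepFun hne).comp hφ hψ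
    have := hi.integral_mul_eq_mul_integral (hgL2 h a).aestronglyMeasurable (hgL2 h' b).aestronglyMeasurable
    calc ∫ ω, g h a ω * g h' b ω ∂μ = ∫ ω, (g h a * g h' b) ω ∂μ := rfl
      _ = (∫ ω, g h a ω ∂μ) * ∫ ω, g h' b ω ∂μ := this
      _ = 0 := by rw [hgmean, hgmean]; ring
  have hck : c * Sig k k = 1 := inv_mul_cancel₀ hk
  have hsame : ∀ h a b, ∫ ω, g h a ω * g h b ω ∂μ
      = Sig a b - c * (Sig a k * Sig b k) := by
    intro h a b
    have I1 := hεint h a b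
    have I2 := (hεint h a k).const_mul (c * Sig b k)
    have I3 := (hεint h k b).const_mul (c * Sig a k)
    have I4 := ((hεint h k k).const_mul (c * Sig b k)).const_mul (c * Sig a k)
    have J2 : Integrable (fun ω => ε h ω a * ε h ω b
        - c * Sig b k * (ε h ω a * ε h ω k)) μ := I1.sub I2
    have J3 : Integrable (fun ω => ε h ω a * ε h ω b
        - c * Sig b k * (ε h ω a * ε h ω k)
        - c * Sig a k * (ε h ω k * ε h ω b)) μ := J2.sub I3
    have expand : (fun ω => g h a ω * g h b ω) = fun ω =>
        ε h ω a * ε h ω b - c * Sig b k * (ε h ω a * ε h ω k)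
          - c * Sig a k * (ε h ω k * ε h ω b)
          + c * Sig a k * (c * Sig b k * (ε h ω k * ε h ω k)) := by
      funext ω; simp only [hgdef]; ring
    rw [expand]
    simp only [integral_add J3 I4, integral_sub J2 I3, integral_sub I1 I2,
      integral_const_mul, hcov]
    linear_combination (c * Sig a k * Sig b k) * hck - (c * Sig a k) * (hsymm k b)
  have hv : ∀ h ω, (fun a => ε h ω a - c * Sig.mulVec (Pi.single k 1) a * ε h ω k)
      = fun a => g h a ω := by
    intro h ω; funext a; rw [hS]
  have integrand_eq : ∀ ω,
      (∑ h, (Ψ h).mulVec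
          (fun a => ε h ω a - c * Sig.mulVec (Pi.single k 1) a * ε h ω k)) i *
      (∑ h, (Ψ h).mulVec
          (fun a => ε h ω a - c * Sig.mulVec (Pi.single k 1) a * ε h ω k)) j
      = ∑ h, ∑ h', ∑ a, ∑ b, (Ψ h i a * Ψ h' j b) * (g h a ω * g h' b ω) := by
    intro ω
    simp only [hv]
    simp only [Finset.sum_apply, Matrix.mulVec, dotProduct]
    rw [Finset.sum_mul_sum]
    refine Finset.sum_congr rfl fun h _ => Finset.sum_congr rfl fun h' _ => ?_
    rw [Finset.sum_mul_sum]
    exact Finset.sum_congr rfl fun a _ => Finset.sum_congr rfl fun b _ => by ring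
  have hint4 : ∀ (h h' : Fin (H + 1)) (a b : Fin N),
      Integrable (fun ω => (Ψ h i a * Ψ h' j b) * (g h a ω * g h' b ω)) μ :=
    fun h h' a b => (hprod_int h h' a b).const_mul _
  calc ∫ ω, (∑ h, (Ψ h).mulVec
            (fun a => ε h ω a - c * Sig.mulVec (Pi.single k 1) a * ε h ω k)) i *
         (∑ h, (Ψ h).mulVec
            (fun a => ε h ω a - c * Sig.mulVec (Pi.single k 1) a * ε h ω k)) j ∂μ
      = ∫ ω, ∑ h, ∑ h', ∑ a, ∑ b, (Ψ h i a * Ψ h' j b) * (g h a ω * g h' b ω) ∂μ :=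
        integral_congr_ae (.of_forall integrand_eq)
    _ = ∑ h, ∑ h', ∑ a, ∑ b, (Ψ h i a * Ψ h' j b) * ∫ ω, g h a ω * g h' b ω ∂μ := by
        rw [integral_finset_sum _ fun h _ => integrable_finset_sum _ fun h' _ =>
          integrable_finset_sum _ fun a _ => integrable_finset_sum _ fun b _ => hint4 h h' a b]
        refine Finset.sum_congr rfl fun h _ => ?_
        rw [integral_finset_sum _ fun h' _ => integrable_finset_sum _ fun a _ =>
          integrable_finset_sum _ fun b _ => hint4 h h' a b]
        refine Finset.sum_congr rfl fun h' _ => ?_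
        rw [integral_finset_sum _ fun a _ => integrable_finset_sum _ fun b _ => hint4 h h' a b]
        refine Finset.sum_congr rfl fun a _ => ?_
        rw [integral_finset_sum _ fun b _ => hint4 h h' a b]
        exact Finset.sum_congr rfl fun b _ => integral_const_mul _ _
    _ = ∑ h, ∑ a, ∑ b, (Ψ h i a * Ψ h j b) * (Sig a b - c * (Sig a k * Sig b k)) := by
        refine Finset.sum_congr rfl fun h _ => ?_
        rw [Finset.sum_eq_single_of_mem h (Finset.mem_univ h)]
        · exact Finset.sum_congr rfl fun a _ => Finset.sum_congr rfl fun b _ => by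
            rw [hsame]
        · intro h' _ hne
          refine Finset.sum_eq_zero fun a _ => Finset.sum_eq_zero fun b _ => ?_
          rw [hcross h h' a b (Ne.symm hne), mul_zero]
    _ = ((∑ h, Ψ h * Sig * (Ψ h)ᵀ) -
          c • ∑ h, Ψ h *
            Matrix.vecMulVec (Sig.mulVec (Pi.single k 1)) (Sig.mulVec (Pi.single k 1)) *
              (Ψ h)ᵀ) i j := by
        simp only [Matrix.sub_apply, Matrix.smul_apply, Matrix.sum_apply, Matrix.mul_apply,
          Matrix.transpose_apply, Matrix.vecMulVec_apply, smul_eq_mul, hS]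
        rw [Finset.mul_sum, ← Finset.sum_sub_distrib]
        refine Finset.sum_congr rfl fun h _ => ?_
        rw [Finset.sum_comm]
        simp only [Finset.sum_mul, Finset.mul_sum, mul_sub, Finset.sum_sub_distrib]
        refine congrArg₂ (· - ·) ?_ ?_ <;>
          exact Finset.sum_congr rfl fun b _ => Finset.sum_congr rfl fun a _ => by ring
end

section
/- (Spanning identity underlying the model-free implied variance.) For all real numbers S > 0 and P > 0, the squared log return satisfies (log(S/P))² = ∫_P^∞ (2(1 − log(K/P))/K²) · max(S − K, 0) dK + ∫_0^P (2(1 + log(P/K))/K²) · max(K − S, 0) dK, where both integrals are finite. -/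
open MeasureTheory Set

lemma span_key (S P : ℝ) (hS : 0 < S) (hP : 0 < P) :
    ∫ K in P..S, 2 * (1 - Real.log (K / P)) / K ^ 2 * (S - K) = Real.log (S / P) ^ 2 := by
  have hmin : 0 < min P S := lt_min hP hS
  have hpos : ∀ x ∈ uIcc P S, 0 < x := fun x hx => lt_of_lt_of_le hmin hx.1
  have hderiv : ∀ x ∈ uIcc P S,
      HasDerivAt (fun K => 2 * (S * Real.log (K / P) / K - Real.log K + Real.log (K / P) ^ 2 / 2))
        (2 * (1 - Real.log (x / P)) / x ^ 2 * (S - x)) x := by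
    intro x hx
    have hx0 : 0 < x := hpos x hx
    have h0 : HasDerivAt (fun K : ℝ => K / P) (1 / P) x := by
      simpa using (hasDerivAt_id x).div_const P
    have hL : HasDerivAt (fun K => Real.log (K / P)) (1 / x) x := by
      have h := h0.log (div_ne_zero hx0.ne' hP.ne')
      convert h using 1
      field_simp
    have hmain := ((((hL.const_mul S).div (hasDerivAt_id x) hx0.ne').sub
        (Real.hasDerivAt_log hx0.ne')).add ((hL.pow 2).div_const 2)).const_mul 2
    refine hmain.congr_deriv ?_
    simp only [id]
    field_simp
    ring
  have hint : IntervalIntegrable (fun K => 2 * (1 - Real.log (K / P)) / K ^ 2 * (S - K))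
      volume P S := by
    apply ContinuousOn.intervalIntegrable
    apply ContinuousOn.mul
    · apply ContinuousOn.div
      · exact continuousOn_const.mul (continuousOn_const.sub
          (ContinuousOn.log (continuousOn_id.div_const P)
            (fun x hx => div_ne_zero (hpos x hx).ne' hP.ne')))
      · exact (continuousOn_id.pow 2)
      · exact fun x hx => pow_ne_zero 2 (hpos x hx).ne'
    · exact continuousOn_const.sub continuousOn_id
  rw [intervalIntegral.integral_eq_sub_of_hasDerivAt hderiv hint]
  have h1 : Real.log (P / P) = 0 := by rw [div_self hP.ne', Real.log_one]
  rw [Real.log_div hS.ne' hP.ne', h1]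
  field_simp
  ring

lemma span_neg (S P K : ℝ) (hP : 0 < P) (hK : 0 < K) :
    2 * (1 + Real.log (P / K)) / K ^ 2 * (K - S)
      = -(2 * (1 - Real.log (K / P)) / K ^ 2 * (S - K)) := by
  rw [Real.log_div hP.ne' hK.ne', Real.log_div hK.ne' hP.ne']
  ring

/-- spanning identity underlying the model-free implied variance: for
`S, P > 0`,
`(log(S/P))² = ∫_P^∞ (2(1 − log(K/P))/K²) max(S−K,0) dK
             + ∫_0^P (2(1 + log(P/K))/K²) max(K−S,0) dK`,
and both integrals are finite. -/
theorem log_return_sq_spanning (S P : ℝ) (hS : 0 < S) (hP : 0 < P) :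
    IntegrableOn (fun K => 2 * (1 - Real.log (K / P)) / K ^ 2 * max (S - K) 0) (Ioi P) ∧
    IntegrableOn (fun K => 2 * (1 + Real.log (P / K)) / K ^ 2 * max (K - S) 0) (Ioo 0 P) ∧
    (Real.log (S / P)) ^ 2
      = (∫ K in Ioi P, 2 * (1 - Real.log (K / P)) / K ^ 2 * max (S - K) 0)
        + ∫ K in Ioo 0 P, 2 * (1 + Real.log (P / K)) / K ^ 2 * max (K - S) 0 := by
  rcases le_or_gt S P with h | h
  · -- S ≤ P : the call integral vanishes
    have hcall0 : EqOn (fun K => 2 * (1 - Real.log (K / P)) / K ^ 2 * max (S - K) 0)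
        (fun _ => (0:ℝ)) (Ioi P) := by
      intro K hK
      have : S - K ≤ 0 := by have := mem_Ioi.mp hK; linarith
      simp [max_eq_right this]
    have hcallInt : IntegrableOn
        (fun K => 2 * (1 - Real.log (K / P)) / K ^ 2 * max (S - K) 0) (Ioi P) :=
      (integrableOn_congr_fun hcall0 measurableSet_Ioi).mpr (integrableOn_zero)
    have hcallVal : (∫ K in Ioi P, 2 * (1 - Real.log (K / P)) / K ^ 2 * max (S - K) 0) = 0 := by
      rw [setIntegral_congr_fun measurableSet_Ioi hcall0]
      simp
    -- put side
    have hsplit : Ioo (0:ℝ) P = Ioo 0 S ∪ Ico S P := (Ioo_union_Ico_eq_Ioo hS h).symm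
    have hput0 : EqOn (fun K => 2 * (1 + Real.log (P / K)) / K ^ 2 * max (K - S) 0)
        (fun _ => (0:ℝ)) (Ioo 0 S) := by
      intro K hK
      have : K - S ≤ 0 := by have := hK.2; linarith
      simp [max_eq_right this]
    have hcont : ContinuousOn (fun K => 2 * (1 + Real.log (P / K)) / K ^ 2 * max (K - S) 0)
        (Icc S P) := by
      have hpos : ∀ x ∈ Icc S P, 0 < x := fun x hx => lt_of_lt_of_le hS hx.1
      apply ContinuousOn.mul
      · apply ContinuousOn.div
        · exact continuousOn_const.mul (continuousOn_const.add
            (ContinuousOn.log (continuousOn_const.div continuousOn_id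
              (fun x hx => (hpos x hx).ne'))
              (fun x hx => div_ne_zero hP.ne' (hpos x hx).ne')))
        · exact (continuousOn_id.pow 2)
        · exact fun x hx => pow_ne_zero 2 (hpos x hx).ne'
      · exact ((continuous_id.sub continuous_const).max continuous_const).continuousOn
    have hputInt2 : IntegrableOn (fun K => 2 * (1 + Real.log (P / K)) / K ^ 2 * max (K - S) 0)
        (Ico S P) := (hcont.integrableOn_compact isCompact_Icc).mono_set Ico_subset_Icc_self
    have hputInt : IntegrableOn (fun K => 2 * (1 + Real.log (P / K)) / K ^ 2 * max (K - S) 0)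
        (Ioo 0 P) := by
      rw [hsplit]
      exact ((integrableOn_congr_fun hput0 measurableSet_Ioo).mpr integrableOn_zero).union hputInt2
    have hdisj : Disjoint (Ioo (0:ℝ) S) (Ico S P) :=
      disjoint_left.mpr (fun x hx hx' => absurd hx.2 (not_lt.mpr hx'.1))
    have hputVal : (∫ K in Ioo 0 P, 2 * (1 + Real.log (P / K)) / K ^ 2 * max (K - S) 0)
        = Real.log (S / P) ^ 2 := by
      rw [hsplit, setIntegral_union hdisj measurableSet_Ico
        ((integrableOn_congr_fun hput0 measurableSet_Ioo).mpr integrableOn_zero) hputInt2,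
        setIntegral_congr_fun measurableSet_Ioo hput0]
      simp only [integral_zero, zero_add]
      rw [MeasureTheory.integral_Ico_eq_integral_Ioo,
        ← MeasureTheory.integral_Ioc_eq_integral_Ioo,
        ← intervalIntegral.integral_of_le h]
      have heq : EqOn (fun K => 2 * (1 + Real.log (P / K)) / K ^ 2 * max (K - S) 0)
          (fun K => -(2 * (1 - Real.log (K / P)) / K ^ 2 * (S - K))) (uIcc S P) := by
        intro K hK
        rw [uIcc_of_le h] at hK
        have hK0 : 0 < K := lt_of_lt_of_le hS hK.1
        have hmax : max (K - S) 0 = K - S := max_eq_left (by linarith [hK.1])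
        simp only [hmax]
        exact span_neg S P K hP hK0
      rw [intervalIntegral.integral_congr heq, intervalIntegral.integral_neg,
        ← intervalIntegral.integral_symm, span_key S P hS hP]
    exact ⟨hcallInt, hputInt, by rw [hcallVal, hputVal, zero_add]⟩
  · -- P < S : the put integral vanishes
    have hput0 : EqOn (fun K => 2 * (1 + Real.log (P / K)) / K ^ 2 * max (K - S) 0)
        (fun _ => (0:ℝ)) (Ioo 0 P) := by
      intro K hK
      have : K - S ≤ 0 := by have := hK.2; linarith
      simp [max_eq_right this]
    have hputInt : IntegrableOn
        (fun K => 2 * (1 + Real.log (P / K)) / K ^ 2 * max (K - S) 0) (Ioo 0 P) :=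
      (integrableOn_congr_fun hput0 measurableSet_Ioo).mpr integrableOn_zero
    have hputVal : (∫ K in Ioo 0 P, 2 * (1 + Real.log (P / K)) / K ^ 2 * max (K - S) 0) = 0 := by
      rw [setIntegral_congr_fun measurableSet_Ioo hput0]
      simp
    have hsplit : Ioi P = Ioc P S ∪ Ioi S := (Ioc_union_Ioi_eq_Ioi h.le).symm
    have hcall0 : EqOn (fun K => 2 * (1 - Real.log (K / P)) / K ^ 2 * max (S - K) 0)
        (fun _ => (0:ℝ)) (Ioi S) := by
      intro K hK
      have : S - K ≤ 0 := by have := mem_Ioi.mp hK; linarith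
      simp [max_eq_right this]
    have hcont : ContinuousOn (fun K => 2 * (1 - Real.log (K / P)) / K ^ 2 * max (S - K) 0)
        (Icc P S) := by
      have hpos : ∀ x ∈ Icc P S, 0 < x := fun x hx => lt_of_lt_of_le hP hx.1
      apply ContinuousOn.mul
      · apply ContinuousOn.div
        · exact continuousOn_const.mul (continuousOn_const.sub
            (ContinuousOn.log (continuousOn_id.div_const P)
              (fun x hx => div_ne_zero (hpos x hx).ne' hP.ne')))
        · exact (continuousOn_id.pow 2)
        · exact fun x hx => pow_ne_zero 2 (hpos x hx).ne'
      · exact ((continuous_const.sub continuous_id).max continuous_const).continuousOn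
    have hcallInt2 : IntegrableOn (fun K => 2 * (1 - Real.log (K / P)) / K ^ 2 * max (S - K) 0)
        (Ioc P S) := (hcont.integrableOn_compact isCompact_Icc).mono_set Ioc_subset_Icc_self
    have hcallInt : IntegrableOn
        (fun K => 2 * (1 - Real.log (K / P)) / K ^ 2 * max (S - K) 0) (Ioi P) := by
      rw [hsplit]
      exact hcallInt2.union
        ((integrableOn_congr_fun hcall0 measurableSet_Ioi).mpr integrableOn_zero)
    have hdisj : Disjoint (Ioc P S) (Ioi S) :=
      disjoint_left.mpr (fun x hx hx' => absurd hx.2 (not_le.mpr hx'))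
    have hcallVal : (∫ K in Ioi P, 2 * (1 - Real.log (K / P)) / K ^ 2 * max (S - K) 0)
        = Real.log (S / P) ^ 2 := by
      rw [hsplit, setIntegral_union hdisj measurableSet_Ioi hcallInt2
        ((integrableOn_congr_fun hcall0 measurableSet_Ioi).mpr integrableOn_zero),
        setIntegral_congr_fun measurableSet_Ioi hcall0]
      simp only [integral_zero, add_zero]
      rw [← intervalIntegral.integral_of_le h.le]
      have heq : EqOn (fun K => 2 * (1 - Real.log (K / P)) / K ^ 2 * max (S - K) 0)
          (fun K => 2 * (1 - Real.log (K / P)) / K ^ 2 * (S - K)) (uIcc P S) := by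
        intro K hK
        rw [uIcc_of_le h.le] at hK
        have hmax : max (S - K) 0 = S - K := max_eq_left (by linarith [hK.2])
        simp only [hmax]
      rw [intervalIntegral.integral_congr heq, span_key S P hS hP]
    exact ⟨hcallInt, hputInt, by rw [hcallVal, hputVal, add_zero]⟩
end
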